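/- Let N ∈ ℕ. For η ∈ ℂ define the unit vector ψ(η) ∈ ℂ^{N+1} by ψ(η)_k = √(binom(N,k)) · η^k · (1+|η|²)^{−N/2} for 0 ≤ k ≤ N. Let n, m be unit vectors in ℝ³ with n₃ ≠ −1, m₃ ≠ −1, and set η = (−n₁ + i n₂)/(1 + n₃), η' = (−m₁ + i m₂)/(1 + m₃). Then ‖ψ(η) − ψ(η')‖² ≥ 2·( 1 − (1 − |n−m|²/4)^{N/2} ) ≥ 2·( 1 − exp( −N·|n−m|²/8 ) ), where ‖·‖ is the norm of the standard Hermitian inner product on ℂ^{N+1}. -/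

import Mathlib

open Complex

noncomputable def coh (N : ℕ) (η : ℂ) : EuclideanSpace ℂ (Fin (N + 1)) :=
  (WithLp.equiv 2 (Fin (N + 1) → ℂ)).symm (fun k =>
    (Real.sqrt (N.choose k) : ℂ) * η ^ (k : ℕ)
      * (((1 + ‖η‖ ^ 2) ^ (-(N : ℝ) / 2) : ℝ) : ℂ))

lemma coh_inner (N : ℕ) (η η' : ℂ) :
    (inner ℂ (coh N η) (coh N η') : ℂ)
    = (1 + (starRingEnd ℂ) η * η') ^ N
        * (((1 + ‖η‖ ^ 2) ^ (-(N : ℝ) / 2)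
            * (1 + ‖η'‖ ^ 2) ^ (-(N : ℝ) / 2) : ℝ) : ℂ) := by
  set c : ℝ := (1 + ‖η‖ ^ 2) ^ (-(N : ℝ) / 2) with hc
  set c' : ℝ := (1 + ‖η'‖ ^ 2) ^ (-(N : ℝ) / 2) with hc'
  rw [PiLp.inner_apply]
  simp only [coh, WithLp.equiv_symm_apply, PiLp.toLp_apply, RCLike.inner_apply', map_mul, map_pow,
    Complex.conj_ofReal]
  have key : ∀ k : Fin (N + 1),
      ((Real.sqrt (N.choose (k : ℕ)) : ℂ) * ((starRingEnd ℂ) η) ^ (k : ℕ) * (c : ℂ))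
        * ((Real.sqrt (N.choose (k : ℕ)) : ℂ) * η' ^ (k : ℕ) * (c' : ℂ))
      = (((starRingEnd ℂ) η * η') ^ (k : ℕ) * (N.choose (k : ℕ) : ℂ)) * ((c : ℂ) * (c' : ℂ)) := by
    intro k
    have : (Real.sqrt (N.choose (k : ℕ)) : ℂ) * (Real.sqrt (N.choose (k : ℕ)) : ℂ)
        = (N.choose (k : ℕ) : ℂ) := by
      rw [← Complex.ofReal_mul, Real.mul_self_sqrt (Nat.cast_nonneg _)]
      push_cast; ring
    linear_combination (((starRingEnd ℂ) η) ^ (k : ℕ) * η' ^ (k : ℕ) * (c : ℂ) * (c' : ℂ)) * this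
  rw [Finset.sum_congr rfl (fun k _ => key k), ← Finset.sum_mul,
    Fin.sum_univ_eq_sum_range (fun k => ((starRingEnd ℂ) η * η') ^ k * (N.choose k : ℂ))]
  have hbin : ∑ k ∈ Finset.range (N + 1), ((starRingEnd ℂ) η * η') ^ k * (N.choose k : ℂ)
      = (1 + (starRingEnd ℂ) η * η') ^ N := by
    rw [add_comm (1 : ℂ) ((starRingEnd ℂ) η * η'), add_pow]; simp
  rw [hbin]; push_cast; ring

lemma coh_norm (N : ℕ) (η : ℂ) : ‖coh N η‖ = 1 := by
  have h := coh_inner N η η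
  have hz : (starRingEnd ℂ) η * η = ((‖η‖ ^ 2 : ℝ) : ℂ) := by
    rw [mul_comm, Complex.mul_conj, Complex.normSq_eq_norm_sq]
  set t : ℝ := ‖η‖ ^ 2 with hts
  have ht : (0 : ℝ) < 1 + t := by positivity
  have h1 : ((1 : ℂ) + (starRingEnd ℂ) η * η) ^ N = (((1 + t) ^ N : ℝ) : ℂ) := by
    rw [hz]; push_cast; ring
  have h2 : ((1 + t) ^ N : ℝ) * ((1 + t) ^ (-(N : ℝ) / 2) * (1 + t) ^ (-(N : ℝ) / 2)) = 1 := by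
    rw [← Real.rpow_natCast (1 + t) N, ← Real.rpow_add ht, ← Real.rpow_add ht]
    norm_num
  have h3 : (inner ℂ (coh N η) (coh N η) : ℂ) = 1 := by
    rw [h, h1, ← Complex.ofReal_mul, h2, Complex.ofReal_one]
  have h4 : ((‖coh N η‖ : ℂ)) ^ 2 = 1 := by
    have := inner_self_eq_norm_sq_to_K (𝕜 := ℂ) (coh N η)
    rw [h3] at this; exact this.symm
  have h5 : ‖coh N η‖ ^ 2 = 1 := by
    have := congrArg Complex.re h4
    simpa [← Complex.ofReal_pow] using this
  nlinarith [norm_nonneg (coh N η)]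

/-- Quantitative lower bound for the distance between two spin-`N/2` coherent
states: `‖ψ(η) − ψ(η')‖² ≥ 2(1 − (1−|n−m|²/4)^{N/2}) ≥ 2(1 − e^{−N|n−m|²/8})`. -/
theorem stmt_19 (N : ℕ) (n₁ n₂ n₃ m₁ m₂ m₃ : ℝ)
    (hn : n₁ ^ 2 + n₂ ^ 2 + n₃ ^ 2 = 1) (hm : m₁ ^ 2 + m₂ ^ 2 + m₃ ^ 2 = 1)
    (hn3 : n₃ ≠ -1) (hm3 : m₃ ≠ -1) :
    let ψ : ℂ → EuclideanSpace ℂ (Fin (N + 1)) := fun η =>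
      (WithLp.equiv 2 (Fin (N + 1) → ℂ)).symm (fun k =>
        (Real.sqrt (N.choose k) : ℂ) * η ^ (k : ℕ)
          * (((1 + ‖η‖ ^ 2) ^ (-(N : ℝ) / 2) : ℝ) : ℂ))
    let η : ℂ := (-(n₁ : ℂ) + Complex.I * (n₂ : ℂ)) / ((1 + n₃ : ℝ) : ℂ)
    let η' : ℂ := (-(m₁ : ℂ) + Complex.I * (m₂ : ℂ)) / ((1 + m₃ : ℝ) : ℂ)
    let dsq : ℝ := (n₁ - m₁) ^ 2 + (n₂ - m₂) ^ 2 + (n₃ - m₃) ^ 2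
    (2 * (1 - (1 - dsq / 4) ^ ((N : ℝ) / 2)) ≤ ‖ψ η - ψ η'‖ ^ 2)
    ∧ (2 * (1 - Real.exp (-((N : ℝ) * dsq / 8)))
        ≤ 2 * (1 - (1 - dsq / 4) ^ ((N : ℝ) / 2))) := by
  intro ψ η η' dsq
  have hψ : ψ = coh N := rfl
  -- positivity of 1 + n₃, 1 + m₃
  have ha : (0:ℝ) < 1 + n₃ := by
    rcases lt_or_eq_of_le (show (-1:ℝ) ≤ n₃ by nlinarith) with h | h
    · linarith
    · exact absurd h.symm hn3
  have hb : (0:ℝ) < 1 + m₃ := by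
    rcases lt_or_eq_of_le (show (-1:ℝ) ≤ m₃ by nlinarith) with h | h
    · linarith
    · exact absurd h.symm hm3
  set dot : ℝ := n₁ * m₁ + n₂ * m₂ + n₃ * m₃ with hdots
  set w : ℝ := (1 + dot) / 2 with hws
  have hw0 : (0:ℝ) ≤ w := by
    have : 0 ≤ (n₁ + m₁)^2 + (n₂ + m₂)^2 + (n₃ + m₃)^2 := by positivity
    rw [hws]; nlinarith
  have hwd : 1 - dsq / 4 = w := by
    rw [hws, hdots]; simp only [dsq]; linarith [hn, hm, sq_nonneg (0:ℝ)]
  set x : ℝ := 2 / (1 + n₃) with hxs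
  set y : ℝ := 2 / (1 + m₃) with hys
  have hx : (0:ℝ) < x := by rw [hxs]; positivity
  have hy : (0:ℝ) < y := by rw [hys]; positivity
  have hA : ((1 + n₃ : ℝ) : ℂ) ≠ 0 := Complex.ofReal_ne_zero.mpr (by linarith)
  have hB : ((1 + m₃ : ℝ) : ℂ) ≠ 0 := Complex.ofReal_ne_zero.mpr (by linarith)
  -- |η|² and |η'|²
  have habs_n : 1 + ‖η‖ ^ 2 = x := by
    rw [Complex.sq_norm]
    have h1 : Complex.normSq η = (n₁^2 + n₂^2) / (1 + n₃)^2 := by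
      show Complex.normSq ((-(n₁ : ℂ) + Complex.I * (n₂ : ℂ)) / ((1 + n₃ : ℝ) : ℂ)) = _
      rw [map_div₀, Complex.normSq_ofReal]
      have h2 : (-(n₁ : ℂ) + Complex.I * (n₂ : ℂ)) = ((-n₁ : ℝ) : ℂ) + ((n₂ : ℝ) : ℂ) * Complex.I := by
        push_cast; ring
      rw [h2, Complex.normSq_add_mul_I]; ring_nf
    rw [h1, hxs]; field_simp; linear_combination hn
  have habs_m : 1 + ‖η'‖ ^ 2 = y := by
    rw [Complex.sq_norm]
    have h1 : Complex.normSq η' = (m₁^2 + m₂^2) / (1 + m₃)^2 := by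
      show Complex.normSq ((-(m₁ : ℂ) + Complex.I * (m₂ : ℂ)) / ((1 + m₃ : ℝ) : ℂ)) = _
      rw [map_div₀, Complex.normSq_ofReal]
      have h2 : (-(m₁ : ℂ) + Complex.I * (m₂ : ℂ)) = ((-m₁ : ℝ) : ℂ) + ((m₂ : ℝ) : ℂ) * Complex.I := by
        push_cast; ring
      rw [h2, Complex.normSq_add_mul_I]; ring_nf
    rw [h1, hys]; field_simp; linear_combination hm
  -- conjugate of η
  have hconj : (starRingEnd ℂ) η = (-(n₁ : ℂ) - Complex.I * (n₂ : ℂ)) / ((1 + n₃ : ℝ) : ℂ) := by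
    show (starRingEnd ℂ) ((-(n₁ : ℂ) + Complex.I * (n₂ : ℂ)) / ((1 + n₃ : ℝ) : ℂ)) = _
    rw [map_div₀]
    simp only [map_add, map_neg, map_mul, Complex.conj_ofReal, Complex.conj_I]
    ring_nf
  have huv : (-(n₁ : ℂ) - Complex.I * (n₂ : ℂ)) * (-(m₁ : ℂ) + Complex.I * (m₂ : ℂ))
      = ((n₁ * m₁ + n₂ * m₂ : ℝ) : ℂ) + ((n₂ * m₁ - n₁ * m₂ : ℝ) : ℂ) * Complex.I := by
    push_cast
    linear_combination (-(n₂ : ℂ) * (m₂ : ℂ)) * Complex.I_sq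
  have e1 : ((1:ℂ) + (starRingEnd ℂ) η * η') * (((1 + n₃) * (1 + m₃) : ℝ) : ℂ)
      = (((1 + n₃) * (1 + m₃) + (n₁ * m₁ + n₂ * m₂) : ℝ) : ℂ)
        + ((n₂ * m₁ - n₁ * m₂ : ℝ) : ℂ) * Complex.I := by
    rw [hconj]
    show ((1:ℂ) + (-(n₁ : ℂ) - Complex.I * (n₂ : ℂ)) / ((1 + n₃ : ℝ) : ℂ)
        * ((-(m₁ : ℂ) + Complex.I * (m₂ : ℂ)) / ((1 + m₃ : ℝ) : ℂ)))
        * (((1 + n₃) * (1 + m₃) : ℝ) : ℂ) = _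
    rw [div_mul_div_comm, ← Complex.ofReal_mul]
    rw [add_mul, one_mul, div_mul_cancel₀ _ (by rw [Complex.ofReal_mul]; exact mul_ne_zero hA hB)]
    rw [huv]
    push_cast; ring
  have hD : (0:ℝ) < (1 + n₃) * (1 + m₃) := by positivity
  have e2 : Complex.normSq ((1:ℂ) + (starRingEnd ℂ) η * η') = x * y * w := by
    have h3 := congrArg Complex.normSq e1
    rw [map_mul, Complex.normSq_ofReal, Complex.normSq_add_mul_I] at h3
    have key : ((1 + n₃) * (1 + m₃) + (n₁ * m₁ + n₂ * m₂))^2 + (n₂ * m₁ - n₁ * m₂)^2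
        = 2 * (1 + dot) * ((1 + n₃) * (1 + m₃)) := by
      rw [hdots]; linear_combination (n₁^2 + n₂^2) * hm + (1 - m₃^2) * hn
    rw [key] at h3
    have h4 : (Complex.normSq ((1:ℂ) + (starRingEnd ℂ) η * η') * ((1 + n₃) * (1 + m₃)))
        * ((1 + n₃) * (1 + m₃)) = (2 * (1 + dot)) * ((1 + n₃) * (1 + m₃)) := by
      linear_combination h3
    have h5 := mul_right_cancel₀ hD.ne' h4
    have h6 : x * y * w = (2 * (1 + dot)) / ((1 + n₃) * (1 + m₃)) := by
      rw [hxs, hys, hws]; field_simp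
    rw [h6, eq_div_iff hD.ne']
    linear_combination h5
  -- absolute value of the inner product
  have hip : ‖(inner ℂ (ψ η) (ψ η') : ℂ)‖ = w ^ ((N : ℝ) / 2) := by
    rw [hψ, coh_inner, norm_mul, Complex.norm_real, Real.norm_eq_abs, norm_pow]
    have hcc : |(1 + ‖η‖ ^ 2) ^ (-(N : ℝ) / 2)
        * (1 + ‖η'‖ ^ 2) ^ (-(N : ℝ) / 2)|
        = x ^ (-(N : ℝ) / 2) * y ^ (-(N : ℝ) / 2) := by
      rw [habs_n, habs_m, abs_of_pos (by positivity)]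
    rw [hcc]
    have habsz : ‖(1:ℂ) + (starRingEnd ℂ) η * η'‖ = (x * y * w) ^ ((1:ℝ) / 2) := by
      rw [Complex.norm_def, e2, Real.sqrt_eq_rpow]
    rw [habsz, ← Real.rpow_natCast ((x * y * w) ^ ((1:ℝ) / 2)) N,
      ← Real.rpow_mul (by positivity)]
    have he : (1:ℝ) / 2 * N = (N : ℝ) / 2 := by ring
    rw [he, Real.mul_rpow (mul_pos hx hy).le hw0, Real.mul_rpow hx.le hy.le,
      neg_div, Real.rpow_neg hx.le, Real.rpow_neg hy.le]
    have hx2 : x ^ ((N : ℝ) / 2) ≠ 0 := (Real.rpow_pos_of_pos hx _).ne'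
    have hy2 : y ^ ((N : ℝ) / 2) ≠ 0 := (Real.rpow_pos_of_pos hy _).ne'
    field_simp
  have hre : Complex.re (inner ℂ (ψ η) (ψ η') : ℂ) ≤ w ^ ((N : ℝ) / 2) := by
    rw [← hip]; exact Complex.re_le_norm _
  have hnorm : ‖ψ η - ψ η'‖ ^ 2 = 2 - 2 * Complex.re (inner ℂ (ψ η) (ψ η') : ℂ) := by
    rw [@norm_sub_sq ℂ]
    rw [hψ, coh_norm, coh_norm]
    simp [RCLike.re_to_complex]
    ring
  constructor
  · rw [hwd, hnorm]; linarith
  · rw [hwd]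
    have h7 : w ≤ Real.exp (-dsq / 4) := by
      have h := Real.add_one_le_exp (-dsq / 4); linarith
    have h8 : w ^ ((N : ℝ) / 2) ≤ Real.exp (-dsq / 4) ^ ((N : ℝ) / 2) :=
      Real.rpow_le_rpow hw0 h7 (by positivity)
    rw [← Real.exp_mul] at h8
    have he2 : -dsq / 4 * ((N : ℝ) / 2) = -((N : ℝ) * dsq / 8) := by ring
    rw [he2] at h8
    linarith
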